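/- Let (M, φ, ψ) be a two-state noncommutative probability space with c-free subalgebras A, B, and let a ∈ A, b ∈ B. Then for all n ≥ 0, φ(a b a^n) = φ(a^{n+1}) ψ(b) + φ(a) φ(a^n)(φ(b) − ψ(b)). Consequently, if E denotes the right quasi-conditional expectation onto the algebra generated by a (characterized by φ(x Q(a)) = φ(E[x] Q(a)) for all polynomials Q), then E[a b] = ψ(b)·a + φ(a)(φ(b) − ψ(b))·1, which in general differs from a·E[b] = φ(b)·a. Hence the left modular property E[a x] = a E[x] fails for the right quasi-conditional expectation. -/

import Mathlib

/-- Conditional freeness (c-freeness) of two subalgebras `A`, `B` of a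
two-state noncommutative probability space `(M, φ, ψ)`: for any alternating
tuple of `ψ`-centered elements from `A ∪ B`, the product is `ψ`-centered and
`φ` factorizes over it. -/
def CFree (M : Type*) [Ring M] [Algebra ℂ M] (φ ψ : M →ₗ[ℂ] ℂ)
    (A B : Subalgebra ℂ M) : Prop :=
  ∀ l : List (M × Bool), l ≠ [] →
    (l.map Prod.snd).Chain' (· ≠ ·) →
    (∀ p ∈ l, (p.2 = true → p.1 ∈ A) ∧ (p.2 = false → p.1 ∈ B) ∧ ψ p.1 = 0) →
    ψ (l.map Prod.fst).prod = 0 ∧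
      φ (l.map Prod.fst).prod = ((l.map Prod.fst).map φ).prod

lemma cfree_key (M : Type*) [Ring M] [Algebra ℂ M]
    (φ ψ : M →ₗ[ℂ] ℂ) (hφ1 : φ 1 = 1) (hψ1 : ψ 1 = 1)
    (A B : Subalgebra ℂ M) (hcf : CFree M φ ψ A B)
    (x y b₀ : M) (hx : x ∈ A) (hy : y ∈ A) (hb0 : b₀ ∈ B) (hψb : ψ b₀ = 0) :
    φ (x * b₀ * y) = φ x * φ b₀ * φ y := by
  set x₀ : M := x - ψ x • 1 with hx0def
  set y₀ : M := y - ψ y • 1 with hy0def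
  have hx0A : x₀ ∈ A := sub_mem hx (A.smul_mem (one_mem A) _)
  have hy0A : y₀ ∈ A := sub_mem hy (A.smul_mem (one_mem A) _)
  have hψx0 : ψ x₀ = 0 := by simp [hx0def, hψ1]
  have hψy0 : ψ y₀ = 0 := by simp [hy0def, hψ1]
  have h3 := hcf [(x₀, true), (b₀, false), (y₀, true)] (by simp) (by simp; exact List.IsChain.cons_cons (by decide) (.cons_cons (by decide) (.singleton _)))
    (by
      intro p hp
      simp only [List.mem_cons, List.not_mem_nil, or_false] at hp
      rcases hp with h | h | h <;> subst h <;> simp [hx0A, hy0A, hb0, hψx0, hψy0, hψb])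
  have h2 := hcf [(x₀, true), (b₀, false)] (by simp) (by simp; exact List.IsChain.cons_cons (by decide) (.singleton _))
    (by
      intro p hp
      simp only [List.mem_cons, List.not_mem_nil, or_false] at hp
      rcases hp with h | h <;> subst h <;> simp [hx0A, hb0, hψx0, hψb])
  have h2' := hcf [(b₀, false), (y₀, true)] (by simp) (by simp; exact List.IsChain.cons_cons (by decide) (.singleton _))
    (by
      intro p hp
      simp only [List.mem_cons, List.not_mem_nil, or_false] at hp
      rcases hp with h | h <;> subst h <;> simp [hy0A, hb0, hψy0, hψb])
  simp only [List.map_cons, List.map_nil, List.prod_cons, List.prod_nil, mul_one] at h3 h2 h2'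
  have e3 : φ (x₀ * (b₀ * y₀)) = φ x₀ * (φ b₀ * φ y₀) := h3.2
  have e2 : φ (x₀ * b₀) = φ x₀ * φ b₀ := h2.2
  have e2' : φ (b₀ * y₀) = φ b₀ * φ y₀ := h2'.2
  have hexp : x * b₀ * y
      = x₀ * (b₀ * y₀) + ψ y • (x₀ * b₀) + ψ x • (b₀ * y₀) + (ψ x * ψ y) • b₀ := by
    simp only [hx0def, hy0def]
    simp [sub_mul, mul_sub, smul_mul_assoc, mul_smul_comm, smul_smul, mul_assoc]
    ring_nf
    module
  have hφx : φ x = φ x₀ + ψ x := by simp [hx0def, hφ1]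
  have hφy : φ y = φ y₀ + ψ y := by simp [hy0def, hφ1]
  rw [hexp]
  simp only [map_add, map_smul, smul_eq_mul, e3, e2, e2', hφx, hφy]
  ring

/-- for c-free `a ∈ A`, `b ∈ B` one has the moment identity
`φ(a b aⁿ) = φ(aⁿ⁺¹) ψ(b) + φ(a) φ(aⁿ)(φ(b) − ψ(b))` for all `n ≥ 0`.
Consequently the right quasi-conditional expectation `E` onto the algebra
generated by `a` (characterized by `φ(x Q(a)) = φ(E[x] Q(a))` for all
polynomials `Q`) satisfies `E[a b] = ψ(b)·a + φ(a)(φ(b) − ψ(b))·1`, exhibiting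
the failure of the left modular property `E[a x] = a E[x]` (whose right-hand
side would be `φ(b)·a`). -/
theorem cfree_right_condexp_left_modular_failure
    (M : Type*) [Ring M] [Algebra ℂ M]
    (φ ψ : M →ₗ[ℂ] ℂ) (hφ1 : φ 1 = 1) (hψ1 : ψ 1 = 1)
    (A B : Subalgebra ℂ M) (hcf : CFree M φ ψ A B)
    (a b : M) (ha : a ∈ A) (hb : b ∈ B) :
    (∀ n : ℕ, φ (a * b * a ^ n)
        = φ (a ^ (n + 1)) * ψ b + φ a * φ (a ^ n) * (φ b - ψ b)) ∧
    (∀ Q : Polynomial ℂ,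
      φ (a * b * Polynomial.aeval a Q)
        = φ ((ψ b • a + (φ a * (φ b - ψ b)) • (1 : M)) * Polynomial.aeval a Q)) := by
  set b₀ : M := b - ψ b • 1 with hb0def
  have hb0B : b₀ ∈ B := sub_mem hb (B.smul_mem (one_mem B) _)
  have hψb0 : ψ b₀ = 0 := by simp [hb0def, hψ1]
  have hφb0 : φ b₀ = φ b - ψ b := by simp [hb0def, hφ1]
  have key : ∀ n : ℕ, φ (a * b * a ^ n)
      = φ (a ^ (n + 1)) * ψ b + φ a * φ (a ^ n) * (φ b - ψ b) := by
    intro n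
    have hsplit : a * b * a ^ n = a * b₀ * a ^ n + ψ b • a ^ (n + 1) := by
      simp [hb0def, mul_sub, sub_mul, mul_smul_comm, smul_mul_assoc, pow_succ',
        mul_assoc]
    rw [hsplit, map_add, map_smul,
      cfree_key M φ ψ hφ1 hψ1 A B hcf a (a ^ n) b₀ ha (pow_mem ha n) hb0B hψb0, hφb0]
    simp only [smul_eq_mul]
    ring
  refine ⟨key, ?_⟩
  intro Q
  induction Q using Polynomial.induction_on' with
  | add p q hp hq =>
    simp only [map_add, mul_add, add_mul] at *
    rw [hp, hq]
  | monomial n t =>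
    have : (Polynomial.aeval a) (Polynomial.monomial n t) = t • a ^ n := by
      simp [Polynomial.aeval_monomial, Algebra.smul_def]
    rw [this]
    rw [mul_smul_comm, mul_smul_comm, map_smul, map_smul, key n]
    congr 1
    rw [add_mul, smul_mul_assoc, smul_mul_assoc, one_mul, ← pow_succ', map_add, map_smul,
      map_smul]
    simp only [smul_eq_mul]
    ring
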